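/- For the unit circle, with Q₀[F] = −(1/4)∂_θX_c·HF − (1/8π)∫_{𝕊¹} X_c(θ')·F(θ')dθ': for every n ≥ 2, Q₀[cos(nθ)X_c] = Q₀[sin(nθ)X_c] = 0, Q₀[cos(nθ)∂_θX_c] = −(1/4)sin(nθ), and Q₀[sin(nθ)∂_θX_c] = (1/4)cos(nθ); moreover Q₀[cosθ·X_c] = (1/8)cosθ, Q₀[sinθ·X_c] = (1/8)sinθ, Q₀[cosθ·∂_θX_c] = −(1/8)sinθ, Q₀[sinθ·∂_θX_c] = (1/8)cosθ, and Q₀[X_c] = Q₀[∂_θX_c] = 0. -/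

import Mathlib

open Real

noncomputable section

abbrev E2 := EuclideanSpace ℝ (Fin 2)

noncomputable def Xc (θ : ℝ) : E2 :=
  (WithLp.equiv 2 (Fin 2 → ℝ)).symm ![Real.cos θ, Real.sin θ]

noncomputable def dXc (θ : ℝ) : E2 :=
  (WithLp.equiv 2 (Fin 2 → ℝ)).symm ![-Real.sin θ, Real.cos θ]

/-- Componentwise periodic Hilbert transform (symmetrized p.v. integral). -/
noncomputable def HilV (F : ℝ → E2) (θ : ℝ) : E2 :=
  (1 / (2 * π)) • ∫ t in (0 : ℝ)..π, Real.cot (t / 2) • (F (θ - t) - F (θ + t))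

/-- The unit-circle operator `Q₀[F] = −(1/4)∂_θX_c·HF − (1/8π)∫ X_c(θ')·F(θ')dθ'`. -/
noncomputable def Q0 (F : ℝ → E2) (θ : ℝ) : ℝ :=
  -(1 / 4) * (inner ℝ (dXc θ) (HilV F θ) : ℝ)
    - (1 / (8 * π)) * ∫ φ in (0 : ℝ)..(2 * π), (inner ℝ (Xc φ) (F φ) : ℝ)

open MeasureTheory

/-! ### Scalar helper machinery -/

noncomputable def Sf (k : ℕ) (t : ℝ) : ℝ := Real.cot (t/2) * Real.sin (k*t)

noncomputable def Tf (k : ℕ) (t : ℝ) : ℝ :=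
  1 + Real.cos (k*t) + 2 * ∑ j ∈ Finset.Ico 1 k, Real.cos (j*t)

lemma Sf_succ (k : ℕ) (t : ℝ) (ht : Real.sin (t/2) ≠ 0) :
    Sf (k+1) t = Sf k t + Real.cos ((k+1)*t) + Real.cos (k*t) := by
  simp only [Sf, Real.cot_eq_cos_div_sin]
  have h1 : ((k:ℝ)+1)*t = (k:ℝ)*t + (t/2 + t/2) := by ring
  have h2 : (k:ℝ)*t = ((k:ℝ)*t - t/2) + t/2 := by ring
  field_simp
  push_cast
  have e1 : t*((k:ℝ)+1) = t*k + 2*(t/2) := by ring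
  rw [e1, Real.sin_add, Real.cos_add, Real.sin_two_mul, Real.cos_two_mul']
  linear_combination (Real.sin (t*k) * Real.cos (t/2) + Real.cos (t*k) * Real.sin (t/2)) * Real.sin_sq_add_cos_sq (t/2)

lemma Sf_one (t : ℝ) (ht : Real.sin (t/2) ≠ 0) : Sf 1 t = 1 + Real.cos t := by
  have hs : Real.sin t = 2*Real.sin (t/2)*Real.cos (t/2) := by
    rw [← Real.sin_two_mul]; ring_nf
  have hc : Real.cos t = 2*Real.cos (t/2)^2 - 1 := by
    rw [← Real.cos_two_mul]; ring_nf
  simp only [Sf, Real.cot_eq_cos_div_sin, Nat.cast_one, one_mul]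
  field_simp
  rw [hs, hc]
  ring

lemma Sf_eq_Tf (k : ℕ) (hk : 1 ≤ k) (t : ℝ) (ht : Real.sin (t/2) ≠ 0) : Sf k t = Tf k t := by
  induction k with
  | zero => omega
  | succ k ih =>
    by_cases h0 : k = 0
    · subst h0
      simp [Tf, Sf_one t ht]
    · have hk1 : 1 ≤ k := Nat.one_le_iff_ne_zero.2 h0
      rw [Sf_succ k t ht, ih hk1]
      simp only [Tf, Finset.sum_Ico_succ_top hk1]
      push_cast
      ring

lemma Tf_cont (k : ℕ) : Continuous (Tf k) := by
  unfold Tf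
  fun_prop

lemma integral_cos_nat (j : ℕ) (hj : 1 ≤ j) (a : ℝ) :
    ∫ t in (0:ℝ)..a, Real.cos (j*t) = Real.sin (j*a)/j := by
  have hj' : (j:ℝ) ≠ 0 := Nat.cast_ne_zero.2 (by omega)
  rw [intervalIntegral.integral_comp_mul_left (fun x => Real.cos x) hj']
  simp [integral_cos, hj']
  ring

lemma integral_sin_nat (j : ℕ) (hj : 1 ≤ j) (a : ℝ) :
    ∫ t in (0:ℝ)..a, Real.sin (j*t) = (1 - Real.cos (j*a))/j := by
  have hj' : (j:ℝ) ≠ 0 := Nat.cast_ne_zero.2 (by omega)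
  rw [intervalIntegral.integral_comp_mul_left (fun x => Real.sin x) hj']
  simp [integral_sin, hj']
  ring

lemma int_cos2pi (n : ℕ) (hn : 1 ≤ n) : (∫ φ in (0:ℝ)..2*π, Real.cos (n*φ)) = 0 := by
  rw [integral_cos_nat n hn]
  rw [show (n:ℝ)*(2*π) = ((2*n : ℕ):ℝ)*π by push_cast; ring, Real.sin_nat_mul_pi, zero_div]

lemma int_sin2pi (n : ℕ) (hn : 1 ≤ n) : (∫ φ in (0:ℝ)..2*π, Real.sin (n*φ)) = 0 := by
  rw [integral_sin_nat n hn, Real.cos_nat_mul_two_pi]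
  simp

lemma int_one2pi : (∫ _ in (0:ℝ)..2*π, (1:ℝ)) = 2*π := by simp

lemma Tf_int (k : ℕ) (hk : 1 ≤ k) : ∫ t in (0:ℝ)..π, Tf k t = π := by
  unfold Tf
  have h1 : IntervalIntegrable (fun t => 1 + Real.cos (k*t)) volume 0 π := by
    apply Continuous.intervalIntegrable; fun_prop
  have h2 : IntervalIntegrable (fun t => 2 * ∑ j ∈ Finset.Ico 1 k, Real.cos (j*t)) volume 0 π := by
    apply Continuous.intervalIntegrable; fun_prop
  rw [intervalIntegral.integral_add h1 h2]
  have h3 : IntervalIntegrable (fun _ => (1:ℝ)) volume 0 π := by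
    apply Continuous.intervalIntegrable; fun_prop
  have h4 : IntervalIntegrable (fun t => Real.cos (k*t)) volume 0 π := by
    apply Continuous.intervalIntegrable; fun_prop
  rw [intervalIntegral.integral_add h3 h4, intervalIntegral.integral_const_mul,
    intervalIntegral.integral_finset_sum]
  · simp only [integral_cos_nat k hk]
    have : ∀ j ∈ Finset.Ico 1 k, (∫ t in (0:ℝ)..π, Real.cos (j*t)) = 0 := by
      intro j hj
      rw [integral_cos_nat j (Finset.mem_Ico.1 hj).1, Real.sin_nat_mul_pi, zero_div]
    rw [Finset.sum_congr rfl this]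
    simp [Real.sin_nat_mul_pi]
  · intro j _
    apply Continuous.intervalIntegrable; fun_prop

lemma sin_half_ne (t : ℝ) (ht : t ∈ Set.Ioc (0:ℝ) π) : Real.sin (t/2) ≠ 0 := by
  have := Real.pi_pos
  exact ne_of_gt (Real.sin_pos_of_pos_of_lt_pi (by linarith [ht.1]) (by linarith [ht.2]))

lemma Sf_ii (k : ℕ) (hk : 1 ≤ k) : IntervalIntegrable (Sf k) volume 0 π := by
  rw [intervalIntegrable_iff_integrableOn_Ioc_of_le Real.pi_pos.le]
  have hT : MeasureTheory.IntegrableOn (Tf k) (Set.Ioc (0:ℝ) π) volume :=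
    ((Tf_cont k).intervalIntegrable 0 π).1
  exact hT.congr_fun (fun t ht => (Sf_eq_Tf k hk t (sin_half_ne t ht)).symm) measurableSet_Ioc

lemma Sf_int (k : ℕ) (hk : 1 ≤ k) : ∫ t in (0:ℝ)..π, Sf k t = π := by
  rw [intervalIntegral.integral_congr_ae (g := Tf k) ?_, Tf_int k hk]
  apply MeasureTheory.ae_of_all
  intro t ht
  rw [Set.uIoc_of_le Real.pi_pos.le] at ht
  exact Sf_eq_Tf k hk t (sin_half_ne t ht)

/-! ### Vector helper machinery -/

noncomputable def v2 (x y : ℝ) : E2 := (WithLp.equiv 2 (Fin 2 → ℝ)).symm ![x, y]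

lemma v2_congr {x y x' y' : ℝ} (h1 : x = x') (h2 : y = y') : v2 x y = v2 x' y' := by rw [h1, h2]

lemma Xc_eq (θ : ℝ) : Xc θ = v2 (Real.cos θ) (Real.sin θ) := rfl
lemma dXc_eq (θ : ℝ) : dXc θ = v2 (-Real.sin θ) (Real.cos θ) := rfl

lemma inner_v2 (a b c d : ℝ) : (inner ℝ (v2 a b) (v2 c d) : ℝ) = a*c + b*d := by
  simp [v2, PiLp.inner_apply, Fin.sum_univ_two, WithLp.equiv_symm_apply, PiLp.toLp_apply]
  ring

lemma smul_v2 (c a b : ℝ) : c • v2 a b = v2 (c*a) (c*b) := by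
  unfold v2
  ext i
  fin_cases i <;> simp [WithLp.equiv_symm_apply, PiLp.toLp_apply]

lemma v2_add (a b c d : ℝ) : v2 a b + v2 c d = v2 (a+c) (b+d) := by
  unfold v2; ext i; fin_cases i <;> simp [WithLp.equiv_symm_apply, PiLp.toLp_apply]

lemma v2_sub (a b c d : ℝ) : v2 a b - v2 c d = v2 (a-c) (b-d) := by
  unfold v2; ext i; fin_cases i <;> simp [WithLp.equiv_symm_apply, PiLp.toLp_apply]

lemma integral_v2 (p q : ℝ → ℝ) (a b : ℝ) (hp : IntervalIntegrable p volume a b)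
    (hq : IntervalIntegrable q volume a b) :
    (∫ t in a..b, v2 (p t) (q t)) = v2 (∫ t in a..b, p t) (∫ t in a..b, q t) := by
  have h : ∀ t, v2 (p t) (q t) = p t • v2 1 0 + q t • v2 0 1 := by
    intro t
    rw [smul_v2, smul_v2, v2_add]
    exact v2_congr (by ring) (by ring)
  simp only [h]
  rw [intervalIntegral.integral_add ⟨hp.1.smul_const _, hp.2.smul_const _⟩
      ⟨hq.1.smul_const _, hq.2.smul_const _⟩,
    intervalIntegral.integral_smul_const, intervalIntegral.integral_smul_const,
    smul_v2, smul_v2, v2_add]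
  exact v2_congr (by ring) (by ring)

lemma hilv_eq (F : ℝ → E2) (θ : ℝ) (k l : ℕ) (hk : 1 ≤ k) (hl : 1 ≤ l) (a b c d : ℝ)
    (hF : ∀ t : ℝ, F (θ - t) - F (θ + t)
        = v2 (a * Real.sin (k*t) + b * Real.sin (l*t)) (c * Real.sin (k*t) + d * Real.sin (l*t))) :
    HilV F θ = v2 ((a+b)/2) ((c+d)/2) := by
  have hπ : (π : ℝ) ≠ 0 := Real.pi_ne_zero
  have h2 : ∀ t : ℝ, Real.cot (t/2) • (F (θ - t) - F (θ + t))
      = v2 (a * Sf k t + b * Sf l t) (c * Sf k t + d * Sf l t) := by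
    intro t
    rw [hF t, smul_v2]
    exact v2_congr (by unfold Sf; ring) (by unfold Sf; ring)
  have hik : IntervalIntegrable (fun t => a * Sf k t + b * Sf l t) volume 0 π :=
    (((Sf_ii k hk).const_mul a).add ((Sf_ii l hl).const_mul b))
  have hil : IntervalIntegrable (fun t => c * Sf k t + d * Sf l t) volume 0 π :=
    (((Sf_ii k hk).const_mul c).add ((Sf_ii l hl).const_mul d))
  unfold HilV
  simp only [h2]
  rw [integral_v2 _ _ _ _ hik hil,
    intervalIntegral.integral_add ((Sf_ii k hk).const_mul a) ((Sf_ii l hl).const_mul b),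
    intervalIntegral.integral_add ((Sf_ii k hk).const_mul c) ((Sf_ii l hl).const_mul d),
    intervalIntegral.integral_const_mul, intervalIntegral.integral_const_mul,
    intervalIntegral.integral_const_mul, intervalIntegral.integral_const_mul,
    Sf_int k hk, Sf_int l hl, smul_v2]
  exact v2_congr (by field_simp) (by field_simp)

lemma Q0_formula (F : ℝ → E2) (θ : ℝ) (h1 h2 : ℝ) (hH : HilV F θ = v2 h1 h2)
    (g : ℝ → ℝ) (hg : ∀ φ, (inner ℝ (Xc φ) (F φ) : ℝ) = g φ) (I : ℝ)
    (hI : (∫ φ in (0:ℝ)..2*π, g φ) = I) :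
    Q0 F θ = -(1/4) * (-Real.sin θ * h1 + Real.cos θ * h2) - (1/(8*π)) * I := by
  unfold Q0
  rw [hH]
  have hgg : (fun φ => (inner ℝ (Xc φ) (F φ) : ℝ)) = g := funext hg
  rw [hgg, hI, dXc_eq, inner_v2]

lemma inner_Xc_Xc (φ : ℝ) : (inner ℝ (Xc φ) (Xc φ) : ℝ) = 1 := by
  rw [Xc_eq, inner_v2]
  nlinarith [Real.sin_sq_add_cos_sq φ]

lemma inner_Xc_dXc (φ : ℝ) : (inner ℝ (Xc φ) (dXc φ) : ℝ) = 0 := by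
  rw [Xc_eq, dXc_eq, inner_v2]
  ring

lemma inner_Xc_smul_Xc (g : ℝ → ℝ) (φ : ℝ) : (inner ℝ (Xc φ) (g φ • Xc φ) : ℝ) = g φ := by
  rw [real_inner_smul_right, inner_Xc_Xc, mul_one]

lemma inner_Xc_smul_dXc (g : ℝ → ℝ) (φ : ℝ) : (inner ℝ (Xc φ) (g φ • dXc φ) : ℝ) = 0 := by
  rw [real_inner_smul_right, inner_Xc_dXc, mul_zero]

/-- the explicit action of `Q₀` on the trigonometric basis. -/
theorem stmt14 :
    (∀ n : ℕ, 2 ≤ n → ∀ θ : ℝ,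
      Q0 (fun φ => Real.cos (n * φ) • Xc φ) θ = 0 ∧
      Q0 (fun φ => Real.sin (n * φ) • Xc φ) θ = 0 ∧
      Q0 (fun φ => Real.cos (n * φ) • dXc φ) θ = -(1 / 4) * Real.sin (n * θ) ∧
      Q0 (fun φ => Real.sin (n * φ) • dXc φ) θ = (1 / 4) * Real.cos (n * θ)) ∧
    (∀ θ : ℝ,
      Q0 (fun φ => Real.cos φ • Xc φ) θ = (1 / 8) * Real.cos θ ∧
      Q0 (fun φ => Real.sin φ • Xc φ) θ = (1 / 8) * Real.sin θ ∧
      Q0 (fun φ => Real.cos φ • dXc φ) θ = -(1 / 8) * Real.sin θ ∧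
      Q0 (fun φ => Real.sin φ • dXc φ) θ = (1 / 8) * Real.cos θ) ∧
    (∀ θ : ℝ, Q0 Xc θ = 0 ∧ Q0 dXc θ = 0) := by
  have hπ : (π : ℝ) ≠ 0 := Real.pi_ne_zero
  refine ⟨fun n hn θ => ?_, fun θ => ?_, fun θ => ?_⟩
  · have hn1 : ((n+1:ℕ):ℝ) = (n:ℝ)+1 := by push_cast; ring
    have hn2 : ((n-1:ℕ):ℝ) = (n:ℝ)-1 := by
      rw [Nat.cast_sub (by omega)]; norm_num
    have hk : 1 ≤ n+1 := by omega
    have hl : 1 ≤ n-1 := by omega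
    refine ⟨?_, ?_, ?_, ?_⟩
    · -- cos(nφ) Xc
      have hF : ∀ t : ℝ, Real.cos ((n:ℝ)*(θ-t)) • Xc (θ-t) - Real.cos ((n:ℝ)*(θ+t)) • Xc (θ+t)
          = v2 (Real.sin (((n:ℝ)+1)*θ) * Real.sin (((n+1:ℕ):ℝ)*t)
                 + Real.sin (((n:ℝ)-1)*θ) * Real.sin (((n-1:ℕ):ℝ)*t))
               (-Real.cos (((n:ℝ)+1)*θ) * Real.sin (((n+1:ℕ):ℝ)*t)
                 + Real.cos (((n:ℝ)-1)*θ) * Real.sin (((n-1:ℕ):ℝ)*t)) := by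
        intro t
        rw [Xc_eq, Xc_eq, smul_v2, smul_v2, v2_sub, hn1, hn2]
        exact v2_congr
          (by simp only [mul_sub, mul_add, add_mul, sub_mul, one_mul, Real.sin_add,
                Real.sin_sub, Real.cos_add, Real.cos_sub]; ring)
          (by simp only [mul_sub, mul_add, add_mul, sub_mul, one_mul, Real.sin_add,
                Real.sin_sub, Real.cos_add, Real.cos_sub]; ring)
      have hH := hilv_eq (fun φ => Real.cos ((n:ℝ)*φ) • Xc φ) θ (n+1) (n-1) hk hl _ _ _ _ hF
      rw [Q0_formula (fun φ => Real.cos ((n:ℝ)*φ) • Xc φ) θ _ _ hH (fun φ => Real.cos ((n:ℝ)*φ))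
        (fun φ => inner_Xc_smul_Xc (fun φ => Real.cos ((n:ℝ)*φ)) φ) 0 (int_cos2pi n (by omega))]
      simp only [mul_sub, mul_add, add_mul, sub_mul, one_mul, Real.sin_add, Real.sin_sub,
        Real.cos_add, Real.cos_sub]
      ring
    · -- sin(nφ) Xc
      have hF : ∀ t : ℝ, Real.sin ((n:ℝ)*(θ-t)) • Xc (θ-t) - Real.sin ((n:ℝ)*(θ+t)) • Xc (θ+t)
          = v2 (-Real.cos (((n:ℝ)+1)*θ) * Real.sin (((n+1:ℕ):ℝ)*t)
                 + -Real.cos (((n:ℝ)-1)*θ) * Real.sin (((n-1:ℕ):ℝ)*t))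
               (-Real.sin (((n:ℝ)+1)*θ) * Real.sin (((n+1:ℕ):ℝ)*t)
                 + Real.sin (((n:ℝ)-1)*θ) * Real.sin (((n-1:ℕ):ℝ)*t)) := by
        intro t
        rw [Xc_eq, Xc_eq, smul_v2, smul_v2, v2_sub, hn1, hn2]
        exact v2_congr
          (by simp only [mul_sub, mul_add, add_mul, sub_mul, one_mul, Real.sin_add,
                Real.sin_sub, Real.cos_add, Real.cos_sub]; ring)
          (by simp only [mul_sub, mul_add, add_mul, sub_mul, one_mul, Real.sin_add,
                Real.sin_sub, Real.cos_add, Real.cos_sub]; ring)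
      have hH := hilv_eq (fun φ => Real.sin ((n:ℝ)*φ) • Xc φ) θ (n+1) (n-1) hk hl _ _ _ _ hF
      rw [Q0_formula (fun φ => Real.sin ((n:ℝ)*φ) • Xc φ) θ _ _ hH (fun φ => Real.sin ((n:ℝ)*φ))
        (fun φ => inner_Xc_smul_Xc (fun φ => Real.sin ((n:ℝ)*φ)) φ) 0 (int_sin2pi n (by omega))]
      simp only [mul_sub, mul_add, add_mul, sub_mul, one_mul, Real.sin_add, Real.sin_sub,
        Real.cos_add, Real.cos_sub]
      ring
    · -- cos(nφ) dXc
      have hF : ∀ t : ℝ, Real.cos ((n:ℝ)*(θ-t)) • dXc (θ-t) - Real.cos ((n:ℝ)*(θ+t)) • dXc (θ+t)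
          = v2 (Real.cos (((n:ℝ)+1)*θ) * Real.sin (((n+1:ℕ):ℝ)*t)
                 + -Real.cos (((n:ℝ)-1)*θ) * Real.sin (((n-1:ℕ):ℝ)*t))
               (Real.sin (((n:ℝ)+1)*θ) * Real.sin (((n+1:ℕ):ℝ)*t)
                 + Real.sin (((n:ℝ)-1)*θ) * Real.sin (((n-1:ℕ):ℝ)*t)) := by
        intro t
        rw [dXc_eq, dXc_eq, smul_v2, smul_v2, v2_sub, hn1, hn2]
        exact v2_congr
          (by simp only [mul_sub, mul_add, add_mul, sub_mul, one_mul, Real.sin_add,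
                Real.sin_sub, Real.cos_add, Real.cos_sub]; ring)
          (by simp only [mul_sub, mul_add, add_mul, sub_mul, one_mul, Real.sin_add,
                Real.sin_sub, Real.cos_add, Real.cos_sub]; ring)
      have hH := hilv_eq (fun φ => Real.cos ((n:ℝ)*φ) • dXc φ) θ (n+1) (n-1) hk hl _ _ _ _ hF
      rw [Q0_formula (fun φ => Real.cos ((n:ℝ)*φ) • dXc φ) θ _ _ hH (fun _ => (0:ℝ))
        (fun φ => inner_Xc_smul_dXc (fun φ => Real.cos ((n:ℝ)*φ)) φ) 0 (by simp)]
      simp only [mul_sub, mul_add, add_mul, sub_mul, one_mul, Real.sin_add, Real.sin_sub,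
        Real.cos_add, Real.cos_sub]
      linear_combination (-(1/4) * Real.sin ((n:ℝ)*θ)) * Real.sin_sq_add_cos_sq θ
    · -- sin(nφ) dXc
      have hF : ∀ t : ℝ, Real.sin ((n:ℝ)*(θ-t)) • dXc (θ-t) - Real.sin ((n:ℝ)*(θ+t)) • dXc (θ+t)
          = v2 (Real.sin (((n:ℝ)+1)*θ) * Real.sin (((n+1:ℕ):ℝ)*t)
                 + -Real.sin (((n:ℝ)-1)*θ) * Real.sin (((n-1:ℕ):ℝ)*t))
               (-Real.cos (((n:ℝ)+1)*θ) * Real.sin (((n+1:ℕ):ℝ)*t)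
                 + -Real.cos (((n:ℝ)-1)*θ) * Real.sin (((n-1:ℕ):ℝ)*t)) := by
        intro t
        rw [dXc_eq, dXc_eq, smul_v2, smul_v2, v2_sub, hn1, hn2]
        exact v2_congr
          (by simp only [mul_sub, mul_add, add_mul, sub_mul, one_mul, Real.sin_add,
                Real.sin_sub, Real.cos_add, Real.cos_sub]; ring)
          (by simp only [mul_sub, mul_add, add_mul, sub_mul, one_mul, Real.sin_add,
                Real.sin_sub, Real.cos_add, Real.cos_sub]; ring)
      have hH := hilv_eq (fun φ => Real.sin ((n:ℝ)*φ) • dXc φ) θ (n+1) (n-1) hk hl _ _ _ _ hF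
      rw [Q0_formula (fun φ => Real.sin ((n:ℝ)*φ) • dXc φ) θ _ _ hH (fun _ => (0:ℝ))
        (fun φ => inner_Xc_smul_dXc (fun φ => Real.sin ((n:ℝ)*φ)) φ) 0 (by simp)]
      simp only [mul_sub, mul_add, add_mul, sub_mul, one_mul, Real.sin_add, Real.sin_sub,
        Real.cos_add, Real.cos_sub]
      linear_combination ((1/4) * Real.cos ((n:ℝ)*θ)) * Real.sin_sq_add_cos_sq θ
  · refine ⟨?_, ?_, ?_, ?_⟩
    · -- cos φ Xc
      have hF : ∀ t : ℝ, Real.cos (θ-t) • Xc (θ-t) - Real.cos (θ+t) • Xc (θ+t)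
          = v2 (Real.sin (2*θ) * Real.sin (((2:ℕ):ℝ)*t) + 0 * Real.sin (((2:ℕ):ℝ)*t))
               (-Real.cos (2*θ) * Real.sin (((2:ℕ):ℝ)*t) + 0 * Real.sin (((2:ℕ):ℝ)*t)) := by
        intro t
        rw [Xc_eq, Xc_eq, smul_v2, smul_v2, v2_sub]
        exact v2_congr
          (by push_cast
              simp only [Real.sin_two_mul, Real.cos_two_mul', Real.sin_add, Real.sin_sub,
                Real.cos_add, Real.cos_sub]; ring)
          (by push_cast
              simp only [Real.sin_two_mul, Real.cos_two_mul', Real.sin_add, Real.sin_sub,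
                Real.cos_add, Real.cos_sub]; ring)
      have hH := hilv_eq (fun φ => Real.cos φ • Xc φ) θ 2 2 one_le_two one_le_two _ _ _ _ hF
      rw [Q0_formula (fun φ => Real.cos φ • Xc φ) θ _ _ hH (fun φ => Real.cos φ)
        (fun φ => by simpa using inner_Xc_smul_Xc (fun φ => Real.cos φ) φ) 0
        (by simpa using int_cos2pi 1 le_rfl)]
      simp only [Real.sin_two_mul, Real.cos_two_mul']
      linear_combination ((1/8) * Real.cos θ) * Real.sin_sq_add_cos_sq θ
    · -- sin φ Xc
      have hF : ∀ t : ℝ, Real.sin (θ-t) • Xc (θ-t) - Real.sin (θ+t) • Xc (θ+t)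
          = v2 (-Real.cos (2*θ) * Real.sin (((2:ℕ):ℝ)*t) + 0 * Real.sin (((2:ℕ):ℝ)*t))
               (-Real.sin (2*θ) * Real.sin (((2:ℕ):ℝ)*t) + 0 * Real.sin (((2:ℕ):ℝ)*t)) := by
        intro t
        rw [Xc_eq, Xc_eq, smul_v2, smul_v2, v2_sub]
        exact v2_congr
          (by push_cast
              simp only [Real.sin_two_mul, Real.cos_two_mul', Real.sin_add, Real.sin_sub,
                Real.cos_add, Real.cos_sub]; ring)
          (by push_cast
              simp only [Real.sin_two_mul, Real.cos_two_mul', Real.sin_add, Real.sin_sub,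
                Real.cos_add, Real.cos_sub]; ring)
      have hH := hilv_eq (fun φ => Real.sin φ • Xc φ) θ 2 2 one_le_two one_le_two _ _ _ _ hF
      rw [Q0_formula (fun φ => Real.sin φ • Xc φ) θ _ _ hH (fun φ => Real.sin φ)
        (fun φ => by simpa using inner_Xc_smul_Xc (fun φ => Real.sin φ) φ) 0
        (by simpa using int_sin2pi 1 le_rfl)]
      simp only [Real.sin_two_mul, Real.cos_two_mul']
      linear_combination ((1/8) * Real.sin θ) * Real.sin_sq_add_cos_sq θ
    · -- cos φ dXc
      have hF : ∀ t : ℝ, Real.cos (θ-t) • dXc (θ-t) - Real.cos (θ+t) • dXc (θ+t)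
          = v2 (Real.cos (2*θ) * Real.sin (((2:ℕ):ℝ)*t) + 0 * Real.sin (((2:ℕ):ℝ)*t))
               (Real.sin (2*θ) * Real.sin (((2:ℕ):ℝ)*t) + 0 * Real.sin (((2:ℕ):ℝ)*t)) := by
        intro t
        rw [dXc_eq, dXc_eq, smul_v2, smul_v2, v2_sub]
        exact v2_congr
          (by push_cast
              simp only [Real.sin_two_mul, Real.cos_two_mul', Real.sin_add, Real.sin_sub,
                Real.cos_add, Real.cos_sub]; ring)
          (by push_cast
              simp only [Real.sin_two_mul, Real.cos_two_mul', Real.sin_add, Real.sin_sub,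
                Real.cos_add, Real.cos_sub]; ring)
      have hH := hilv_eq (fun φ => Real.cos φ • dXc φ) θ 2 2 one_le_two one_le_two _ _ _ _ hF
      rw [Q0_formula (fun φ => Real.cos φ • dXc φ) θ _ _ hH (fun _ => (0:ℝ))
        (fun φ => inner_Xc_smul_dXc (fun φ => Real.cos φ) φ) 0 (by simp)]
      simp only [Real.sin_two_mul, Real.cos_two_mul']
      linear_combination (-(1/8) * Real.sin θ) * Real.sin_sq_add_cos_sq θ
    · -- sin φ dXc
      have hF : ∀ t : ℝ, Real.sin (θ-t) • dXc (θ-t) - Real.sin (θ+t) • dXc (θ+t)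
          = v2 (Real.sin (2*θ) * Real.sin (((2:ℕ):ℝ)*t) + 0 * Real.sin (((2:ℕ):ℝ)*t))
               (-Real.cos (2*θ) * Real.sin (((2:ℕ):ℝ)*t) + 0 * Real.sin (((2:ℕ):ℝ)*t)) := by
        intro t
        rw [dXc_eq, dXc_eq, smul_v2, smul_v2, v2_sub]
        exact v2_congr
          (by push_cast
              simp only [Real.sin_two_mul, Real.cos_two_mul', Real.sin_add, Real.sin_sub,
                Real.cos_add, Real.cos_sub]; ring)
          (by push_cast
              simp only [Real.sin_two_mul, Real.cos_two_mul', Real.sin_add, Real.sin_sub,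
                Real.cos_add, Real.cos_sub]; ring)
      have hH := hilv_eq (fun φ => Real.sin φ • dXc φ) θ 2 2 one_le_two one_le_two _ _ _ _ hF
      rw [Q0_formula (fun φ => Real.sin φ • dXc φ) θ _ _ hH (fun _ => (0:ℝ))
        (fun φ => inner_Xc_smul_dXc (fun φ => Real.sin φ) φ) 0 (by simp)]
      simp only [Real.sin_two_mul, Real.cos_two_mul']
      linear_combination ((1/8) * Real.cos θ) * Real.sin_sq_add_cos_sq θ
  · constructor
    · -- Xc
      have hF : ∀ t : ℝ, Xc (θ-t) - Xc (θ+t)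
          = v2 (2*Real.sin θ * Real.sin (((1:ℕ):ℝ)*t) + 0 * Real.sin (((1:ℕ):ℝ)*t))
               (-(2*Real.cos θ) * Real.sin (((1:ℕ):ℝ)*t) + 0 * Real.sin (((1:ℕ):ℝ)*t)) := by
        intro t
        rw [Xc_eq, Xc_eq, v2_sub]
        exact v2_congr
          (by push_cast
              simp only [one_mul, Real.sin_add, Real.sin_sub, Real.cos_add, Real.cos_sub]; ring)
          (by push_cast
              simp only [one_mul, Real.sin_add, Real.sin_sub, Real.cos_add, Real.cos_sub]; ring)
      have hH := hilv_eq Xc θ 1 1 le_rfl le_rfl _ _ _ _ hF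
      rw [Q0_formula Xc θ _ _ hH (fun _ => (1:ℝ))
        (fun φ => inner_Xc_Xc φ) (2*π) int_one2pi]
      field_simp
      nlinarith [Real.sin_sq_add_cos_sq θ, Real.pi_pos]
    · -- dXc
      have hF : ∀ t : ℝ, dXc (θ-t) - dXc (θ+t)
          = v2 (2*Real.cos θ * Real.sin (((1:ℕ):ℝ)*t) + 0 * Real.sin (((1:ℕ):ℝ)*t))
               (2*Real.sin θ * Real.sin (((1:ℕ):ℝ)*t) + 0 * Real.sin (((1:ℕ):ℝ)*t)) := by
        intro t
        rw [dXc_eq, dXc_eq, v2_sub]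
        exact v2_congr
          (by push_cast
              simp only [one_mul, Real.sin_add, Real.sin_sub, Real.cos_add, Real.cos_sub]; ring)
          (by push_cast
              simp only [one_mul, Real.sin_add, Real.sin_sub, Real.cos_add, Real.cos_sub]; ring)
      have hH := hilv_eq dXc θ 1 1 le_rfl le_rfl _ _ _ _ hF
      rw [Q0_formula dXc θ _ _ hH (fun _ => (0:ℝ))
        (fun φ => inner_Xc_dXc φ) 0 (by simp)]
      ring
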